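/- Let n > −1, ν > −(n+1)/2, and suppose C > 0 is a constant such that ∫_0^x I_{ν+n}(t)/t^ν dt ≤ C · I_{ν+n}(x)/x^ν for all x > 0. If 0 < γ < 1/C and γ < 1, then for all x > 0, ∫_0^x e^{−γt} I_{ν+n}(t)/t^ν dt < (e^{−γx}/(1 − Cγ)) · ∫_0^x I_{ν+n}(t)/t^ν dt. -/

import Mathlib

open MeasureTheory Set Real

noncomputable def pc (μ : ℝ) (k : ℕ) : ℝ :=
  1 / ((Nat.factorial k : ℝ) * Real.Gamma (μ + (k : ℝ) + 1))

lemma pc_pos {μ : ℝ} (hμ : -1 < μ) (k : ℕ) : 0 < pc μ k := by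
  have h1 : (0:ℝ) < μ + (k:ℝ) + 1 := by
    have : (0:ℝ) ≤ (k:ℝ) := Nat.cast_nonneg k
    linarith
  have := Real.Gamma_pos_of_pos h1
  have hf : (0:ℝ) < (Nat.factorial k : ℝ) := by positivity
  unfold pc; positivity

lemma pc_succ {μ : ℝ} (hμ : -1 < μ) (k : ℕ) :
    pc μ (k+1) = pc μ k / ((k+1) * (μ + k + 1)) := by
  have h1 : (0:ℝ) < μ + (k:ℝ) + 1 := by
    have : (0:ℝ) ≤ (k:ℝ) := Nat.cast_nonneg k
    linarith
  have hG : Real.Gamma (μ + (k+1:ℕ) + 1) = (μ + k + 1) * Real.Gamma (μ + k + 1) := by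
    push_cast
    rw [show μ + ((k:ℝ)+1) + 1 = (μ + k + 1) + 1 by ring, Real.Gamma_add_one h1.ne']
  unfold pc
  rw [hG]
  rw [Nat.factorial_succ]
  push_cast
  have hG' := (Real.Gamma_pos_of_pos h1).ne'
  have hf : ((Nat.factorial k : ℝ)) ≠ 0 := by positivity
  field_simp

lemma psummable {μ : ℝ} (hμ : -1 < μ) (y : ℝ) (hy : 0 ≤ y) :
    Summable (fun k : ℕ => y ^ k * pc μ k) := by
  apply summable_of_ratio_norm_eventually_le (r := 1/2) (by norm_num)
  have hev : ∀ᶠ k : ℕ in Filter.atTop, (2*y + |μ| + 1 : ℝ) ≤ (k:ℝ) := by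
    exact_mod_cast Filter.Tendsto.eventually_ge_atTop tendsto_natCast_atTop_atTop _
  filter_upwards [hev] with k hk
  have hk0 : (0:ℝ) ≤ (k:ℝ) := Nat.cast_nonneg k
  have hpc := pc_pos hμ k
  have hpc1 := pc_pos hμ (k+1)
  rw [pc_succ hμ k]
  have hden : (0:ℝ) < ((k:ℝ)+1) * (μ + k + 1) := by
    have : |μ| + μ ≥ 0 := by cases abs_cases μ <;> linarith
    nlinarith [abs_nonneg μ]
  rw [Real.norm_of_nonneg (by positivity), Real.norm_of_nonneg (by positivity)]
  rw [pow_succ, div_eq_mul_inv]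
  have key : y * ((((k:ℝ)+1) * (μ + k + 1))⁻¹) ≤ 1/2 := by
    rcases eq_or_lt_of_le hy with h|h
    · rw [← h]; norm_num
    · rw [mul_inv_le_iff₀ hden]
      have h1 : 2 * y ≤ (k:ℝ) := by nlinarith [abs_nonneg μ]
      have h2 : (1:ℝ) ≤ μ + k + 1 := by cases abs_cases μ <;> linarith
      nlinarith
  calc y ^ k * y * (pc μ k * (((k:ℝ)+1) * (μ + k + 1))⁻¹)
      = (y * (((k:ℝ)+1) * (μ + k + 1))⁻¹) * (y ^ k * pc μ k) := by ring
    _ ≤ (1/2) * (y ^ k * pc μ k) := by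
        apply mul_le_mul_of_nonneg_right key (by positivity)

noncomputable def pfun (μ y : ℝ) : ℝ := ∑' k : ℕ, y ^ k * pc μ k

lemma pfun_mono {μ : ℝ} (hμ : -1 < μ) {a b : ℝ} (ha : 0 ≤ a) (hab : a ≤ b) :
    pfun μ a ≤ pfun μ b := by
  apply Summable.tsum_le_tsum _ (psummable hμ a ha) (psummable hμ b (ha.trans hab))
  intro k
  exact mul_le_mul_of_nonneg_right (pow_le_pow_left₀ ha hab k) (pc_pos hμ k).le

lemma pc_zero_le_pfun {μ : ℝ} (hμ : -1 < μ) {y : ℝ} (hy : 0 ≤ y) : pc μ 0 ≤ pfun μ y := by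
  have h := psummable hμ y hy
  calc pc μ 0 = y ^ 0 * pc μ 0 := by simp
    _ ≤ pfun μ y := Summable.le_tsum h 0 (fun k _ => by
        have := pc_pos hμ k; positivity)

lemma pfun_pos {μ : ℝ} (hμ : -1 < μ) {y : ℝ} (hy : 0 ≤ y) : 0 < pfun μ y :=
  lt_of_lt_of_le (pc_pos hμ 0) (pc_zero_le_pfun hμ hy)

lemma pfun_continuousAt {μ : ℝ} (hμ : -1 < μ) (y₀ : ℝ) : ContinuousAt (pfun μ) y₀ := by
  set R : ℝ := |y₀| + 1 with hR
  have hR0 : 0 ≤ R := by positivity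
  have hcont : ContinuousOn (pfun μ) (Metric.ball 0 R) := by
    apply continuousOn_tsum (u := fun k => R ^ k * pc μ k)
      (fun k => (Continuous.continuousOn (by continuity))) (psummable hμ R hR0)
    intro k y hy
    have hyR : |y| ≤ R := by
      rw [Metric.mem_ball, Real.dist_eq, sub_zero] at hy
      exact hy.le
    rw [norm_mul, Real.norm_of_nonneg (pc_pos hμ k).le, Real.norm_eq_abs, abs_pow]
    exact mul_le_mul_of_nonneg_right (pow_le_pow_left₀ (abs_nonneg y) hyR k) (pc_pos hμ k).le
  have hmem : y₀ ∈ Metric.ball (0:ℝ) R := by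
    rw [Metric.mem_ball, Real.dist_eq, sub_zero, hR]
    linarith [abs_nonneg y₀]
  exact hcont.continuousAt (Metric.isOpen_ball.mem_nhds hmem)

/-- Modified Bessel function of the first kind:
`I_ν(x) = Σ_{k=0}^∞ (x/2)^{ν+2k} / (k! Γ(ν+k+1))`. -/
noncomputable def besselI (ν x : ℝ) : ℝ :=
  ∑' k : ℕ, (x / 2) ^ (ν + 2 * (k : ℝ)) / ((Nat.factorial k : ℝ) * Real.Gamma (ν + (k : ℝ) + 1))

lemma besselI_eq {μ : ℝ} {t : ℝ} (ht : 0 < t) :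
    besselI μ t = (t / 2) ^ μ * pfun μ (t ^ 2 / 4) := by
  unfold besselI pfun
  rw [← tsum_mul_left]
  apply tsum_congr
  intro k
  have h2 : (0:ℝ) < t / 2 := by linarith
  have hpow : (t/2 : ℝ) ^ (μ + 2*(k:ℝ)) = (t/2) ^ μ * (t^2/4) ^ k := by
    rw [Real.rpow_add h2]
    congr 1
    rw [show (2*(k:ℝ)) = ((2*k : ℕ):ℝ) by push_cast; ring, Real.rpow_natCast, pow_mul]
    congr 1
    ring
  rw [hpow]
  simp only [pc]
  ring

theorem stmt_15 (ν n C γ : ℝ) (hn : n > -1) (hν : ν > -(n + 1) / 2) (hC : 0 < C)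
    (hCbound : ∀ x : ℝ, 0 < x →
      (∫ t in (0 : ℝ)..x, besselI (ν + n) t / t ^ ν) ≤ C * (besselI (ν + n) x / x ^ ν))
    (hγ0 : 0 < γ) (hγC : γ < 1 / C) (hγ1 : γ < 1) :
    ∀ x : ℝ, 0 < x →
      (∫ t in (0 : ℝ)..x, Real.exp (-(γ * t)) * besselI (ν + n) t / t ^ ν) <
        (Real.exp (-(γ * x)) / (1 - C * γ)) * ∫ t in (0 : ℝ)..x, besselI (ν + n) t / t ^ ν := by
  intro x hx
  set μ : ℝ := ν + n with hμdef
  have hμ : (-1:ℝ) < μ := by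
    have : -(n+1)/2 + n > -1 := by linarith
    simp only [hμdef]; linarith
  set f : ℝ → ℝ := fun t => besselI μ t / t ^ ν with hfdef
  set g : ℝ → ℝ := fun t => t ^ n * ((2:ℝ) ^ (-μ) * pfun μ (t ^ 2 / 4)) with hgdef
  -- representation
  have hfg : ∀ t : ℝ, 0 < t → f t = g t := by
    intro t ht
    simp only [hfdef, hgdef]
    have htν : (0:ℝ) < t ^ ν := Real.rpow_pos_of_pos ht ν
    have h2m : (0:ℝ) < (2:ℝ) ^ μ := Real.rpow_pos_of_pos (by norm_num) μ
    have hμν : t ^ μ / t ^ ν = t ^ n := by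
      rw [← Real.rpow_sub ht]; congr 1; rw [hμdef]; ring
    rw [besselI_eq ht, Real.div_rpow (by linarith) (by norm_num),
      Real.rpow_neg (by norm_num : (0:ℝ) ≤ 2), ← hμν]
    field_simp [htν.ne', h2m.ne']
  have hgpos : ∀ t : ℝ, 0 < t → 0 < g t := by
    intro t ht
    have h1 : (0:ℝ) < t ^ n := Real.rpow_pos_of_pos ht n
    have h2 : (0:ℝ) < (2:ℝ) ^ (-μ) := Real.rpow_pos_of_pos (by norm_num) _
    have h3 := pfun_pos hμ (by positivity : (0:ℝ) ≤ t ^ 2 / 4)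
    simp only [hgdef]; positivity
  have hfpos : ∀ t : ℝ, 0 < t → 0 < f t := fun t ht => (hfg t ht) ▸ hgpos t ht
  -- continuity of g on Ioi 0
  have hgca : ∀ t : ℝ, 0 < t → ContinuousAt g t := by
    intro t ht
    apply ContinuousAt.mul
    · exact Real.continuousAt_rpow_const t n (Or.inl ht.ne')
    · exact continuousAt_const.mul ((pfun_continuousAt hμ _).comp (by fun_prop))
  have hfca : ∀ t : ℝ, 0 < t → ContinuousAt f t := by
    intro t ht
    exact (hgca t ht).congr
      (Filter.eventuallyEq_of_mem (Ioi_mem_nhds ht) (fun s hs => (hfg s hs).symm))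
  -- measurability
  have hfaesm : ∀ s : Set ℝ, MeasurableSet s → s ⊆ Ioi 0 →
      AEStronglyMeasurable f (volume.restrict s) := by
    intro s hs hsub
    have hg : AEStronglyMeasurable g (volume.restrict s) := by
      refine ContinuousOn.aestronglyMeasurable (fun t ht => (hgca t (hsub ht)).continuousWithinAt) hs
    refine hg.congr ?_
    refine ((ae_restrict_iff' hs).2 (ae_of_all _ fun t ht => (hfg t (hsub ht)).symm))
  -- integrability of f on [0,b]
  have hfint : ∀ b : ℝ, 0 < b → IntegrableOn f (Ioc 0 b) volume := by
    intro b hb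
    have hdom : IntegrableOn (fun t : ℝ => t ^ n * ((2:ℝ) ^ (-μ) * pfun μ (b ^ 2 / 4)))
        (Ioc 0 b) volume := by
      have h1 : IntervalIntegrable (fun s : ℝ => s ^ n) volume 0 b :=
        intervalIntegral.intervalIntegrable_rpow' (by linarith)
      have h2 := h1.mul_const ((2:ℝ) ^ (-μ) * pfun μ (b ^ 2 / 4))
      exact (intervalIntegrable_iff_integrableOn_Ioc_of_le hb.le).1 h2
    refine hdom.integrable.mono' (hfaesm _ measurableSet_Ioc Ioc_subset_Ioi_self) ?_
    refine (ae_restrict_iff' measurableSet_Ioc).2 (ae_of_all _ fun t ht => ?_)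
    have ht0 := ht.1
    rw [Real.norm_of_nonneg (hfpos t ht0).le, hfg t ht0]
    simp only [hgdef]
    have h2 : (0:ℝ) < (2:ℝ) ^ (-μ) := Real.rpow_pos_of_pos (by norm_num) _
    have hmono : pfun μ (t ^ 2 / 4) ≤ pfun μ (b ^ 2 / 4) := by
      apply pfun_mono hμ (by positivity)
      have : t ^ 2 ≤ b ^ 2 := by nlinarith [ht.2, ht.1]
      linarith
    have htn : (0:ℝ) ≤ t ^ n := (Real.rpow_pos_of_pos ht0 n).le
    exact mul_le_mul_of_nonneg_left (mul_le_mul_of_nonneg_left hmono h2.le) htn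
  have hfiv : ∀ b : ℝ, 0 < b → IntervalIntegrable f volume 0 b := fun b hb =>
    (intervalIntegrable_iff_integrableOn_Ioc_of_le hb.le).2 (hfint b hb)
  -- primitive
  set F : ℝ → ℝ := fun t => ∫ s in (0:ℝ)..t, f s with hFdef
  have hCb : ∀ t : ℝ, 0 < t → F t ≤ C * f t := fun t ht => hCbound t ht
  have hFcont : ContinuousOn F (Icc 0 x) := by
    have hI : IntegrableOn f (uIcc 0 x) := by
      rw [uIcc_of_le hx.le, integrableOn_Icc_iff_integrableOn_Ioc]
      exact hfint x hx
    have := intervalIntegral.continuousOn_primitive_interval hI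
    rwa [uIcc_of_le hx.le] at this
  have hsmeas : ∀ t : ℝ, 0 < t → StronglyMeasurableAtFilter f (nhds t) := by
    intro t ht
    exact ⟨Ioi 0, Ioi_mem_nhds (α := ℝ) ht, hfaesm _ measurableSet_Ioi subset_rfl⟩
  have hFderiv : ∀ t ∈ Ioo (0:ℝ) x, HasDerivAt F (f t) t := fun t ht =>
    intervalIntegral.integral_hasDerivAt_right (hfiv t ht.1) (hsmeas t ht.1) (hfca t ht.1)
  set E : ℝ → ℝ := fun t => Real.exp (-(γ * t)) with hEdef
  have hEcont : Continuous E := by fun_prop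
  have hEpos : ∀ t : ℝ, 0 < E t := fun t => Real.exp_pos _
  have hEle : ∀ t : ℝ, 0 ≤ t → E t ≤ 1 := by
    intro t ht
    apply Real.exp_le_one_iff.2
    nlinarith
  have hEderiv : ∀ t : ℝ, HasDerivAt E (-γ * E t) t := by
    intro t
    have h := (((hasDerivAt_id t).const_mul γ).neg).exp
    simp only [hEdef, mul_one, id_eq] at h ⊢
    convert h using 1
    show -γ * rexp (-(γ * t)) = rexp (-(γ * t)) * -γ
    ring
    rfl
  set G : ℝ → ℝ := fun t => E t * F t with hGdef
  have hGcont : ContinuousOn G (Icc 0 x) := hEcont.continuousOn.mul hFcont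
  have hGderiv : ∀ t ∈ Ioo (0:ℝ) x, HasDerivAt G (E t * f t - γ * (E t * F t)) t := by
    intro t ht
    have h := (hEderiv t).mul (hFderiv t ht)
    exact h.congr_deriv (by ring)
  -- integrability of E * f and E * F
  have hEfint : IntervalIntegrable (fun t => E t * f t) volume 0 x := by
    rw [intervalIntegrable_iff_integrableOn_Ioc_of_le hx.le]
    have haesm : AEStronglyMeasurable (fun t => E t * f t) (volume.restrict (Ioc 0 x)) :=
      (hEcont.aestronglyMeasurable).mul (hfaesm _ measurableSet_Ioc Ioc_subset_Ioi_self)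
    refine (hfint x hx).mono' haesm ?_
    refine (ae_restrict_iff' measurableSet_Ioc).2 (ae_of_all _ fun t ht => ?_)
    have h1 := hfpos t ht.1
    have h2 := hEpos t
    have h3 := hEle t ht.1.le
    rw [Real.norm_of_nonneg (by positivity)]
    nlinarith
  have hEFint : IntervalIntegrable (fun t => E t * F t) volume 0 x := by
    apply ContinuousOn.intervalIntegrable
    rw [uIcc_of_le hx.le]
    exact hEcont.continuousOn.mul hFcont
  -- integration by parts
  have hsplit : (∫ t in (0:ℝ)..x, E t * f t) - γ * ∫ t in (0:ℝ)..x, E t * F t = E x * F x := by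
    have h0 : G 0 = 0 := by
      simp [hGdef, hFdef]
    have hparts := intervalIntegral.integral_eq_sub_of_hasDerivAt_of_le hx.le hGcont hGderiv
      (hEfint.sub (hEFint.const_mul γ))
    rw [intervalIntegral.integral_sub hEfint (hEFint.const_mul γ),
      intervalIntegral.integral_const_mul] at hparts
    rw [hparts, h0, sub_zero]
  -- strict positivity of ∫ E (C f - F)
  set ε : ℝ := min x (C * (n + 1)) with hεdef
  have hCn : 0 < C * (n + 1) := by nlinarith
  have hε0 : 0 < ε := lt_min hx hCn
  have hεx : ε ≤ x := min_le_left _ _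
  have hkey : ∀ t : ℝ, 0 < t → t < C * (n + 1) → F t < C * f t := by
    intro t ht htC
    set M : ℝ := (2:ℝ) ^ (-μ) * pfun μ (t ^ 2 / 4) with hMdef
    have hM : 0 < M := by
      have h2 : (0:ℝ) < (2:ℝ) ^ (-μ) := Real.rpow_pos_of_pos (by norm_num) _
      have h3 := pfun_pos hμ (by positivity : (0:ℝ) ≤ t ^ 2 / 4)
      positivity
    have htn : (0:ℝ) < t ^ n := Real.rpow_pos_of_pos ht n
    have hFle : F t ≤ M * (t ^ (n + 1) / (n + 1)) := by
      have hdom : IntegrableOn (fun s : ℝ => s ^ n * M) (Ioc 0 t) volume := by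
        have h1 : IntervalIntegrable (fun s : ℝ => s ^ n) volume 0 t :=
          intervalIntegral.intervalIntegrable_rpow' (by linarith)
        exact (intervalIntegrable_iff_integrableOn_Ioc_of_le ht.le).1 (h1.mul_const M)
      have hmono : ∀ s ∈ Ioc (0:ℝ) t, f s ≤ s ^ n * M := by
        intro s hs
        rw [hfg s hs.1]
        simp only [hgdef, hMdef]
        have h2 : (0:ℝ) < (2:ℝ) ^ (-μ) := Real.rpow_pos_of_pos (by norm_num) _
        have hsn : (0:ℝ) ≤ s ^ n := (Real.rpow_pos_of_pos hs.1 n).le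
        have hpm : pfun μ (s ^ 2 / 4) ≤ pfun μ (t ^ 2 / 4) := by
          apply pfun_mono hμ (by positivity)
          nlinarith [hs.1, hs.2]
        exact mul_le_mul_of_nonneg_left (mul_le_mul_of_nonneg_left hpm h2.le) hsn
      calc F t = ∫ s in Ioc (0:ℝ) t, f s := intervalIntegral.integral_of_le ht.le
        _ ≤ ∫ s in Ioc (0:ℝ) t, s ^ n * M :=
            setIntegral_mono_on (hfint t ht) hdom measurableSet_Ioc hmono
        _ = M * (t ^ (n + 1) / (n + 1)) := by
            rw [← intervalIntegral.integral_of_le ht.le,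
              intervalIntegral.integral_mul_const, integral_rpow (Or.inl (by linarith)),
              Real.zero_rpow (by linarith : n + 1 ≠ 0)]
            ring
    have hpow : t ^ (n + 1) = t ^ n * t := by
      rw [Real.rpow_add ht, Real.rpow_one]
    have hlt : M * (t ^ (n + 1) / (n + 1)) < C * (t ^ n * M) := by
      rw [hpow]
      have h1 : t / (n + 1) < C := (div_lt_iff₀ (by linarith)).2 (by linarith)
      have h2 := mul_lt_mul_of_pos_left h1 (by positivity : (0:ℝ) < M * t ^ n)
      calc M * (t ^ n * t / (n + 1)) = (M * t ^ n) * (t / (n + 1)) := by ring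
        _ < (M * t ^ n) * C := h2
        _ = C * (t ^ n * M) := by ring
    calc F t ≤ M * (t ^ (n + 1) / (n + 1)) := hFle
      _ < C * (t ^ n * M) := hlt
      _ = C * f t := by rw [hfg t ht]
  have hφint : IntervalIntegrable (fun t => E t * (C * f t - F t)) volume 0 x := by
    have h1 := (hEfint.const_mul C).sub hEFint
    have heq : (fun t => C * (E t * f t) - E t * F t) = fun t => E t * (C * f t - F t) := by
      funext t; ring
    rwa [heq] at h1
  have hpos : 0 < ∫ t in (0:ℝ)..x, E t * (C * f t - F t) := by
    have hsub1 : IntervalIntegrable (fun t => E t * (C * f t - F t)) volume 0 ε :=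
      hφint.mono_set (by rw [uIcc_of_le hε0.le, uIcc_of_le hx.le]; exact Icc_subset_Icc_right hεx)
    have hsub2 : IntervalIntegrable (fun t => E t * (C * f t - F t)) volume ε x :=
      hφint.mono_set (by rw [uIcc_of_le hεx, uIcc_of_le hx.le]; exact Icc_subset_Icc_left hε0.le)
    have hadj := intervalIntegral.integral_add_adjacent_intervals hsub1 hsub2
    have hp1 : 0 < ∫ t in (0:ℝ)..ε, E t * (C * f t - F t) := by
      apply intervalIntegral.intervalIntegral_pos_of_pos_on hsub1 _ hε0
      intro t ht
      have ht0 := ht.1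
      have htC : t < C * (n + 1) := lt_of_lt_of_le ht.2 (min_le_right _ _)
      have := hkey t ht0 htC
      have := hEpos t
      nlinarith
    have hp2 : 0 ≤ ∫ t in (ε:ℝ)..x, E t * (C * f t - F t) := by
      apply intervalIntegral.integral_nonneg hεx
      intro t ht
      have ht0 : 0 < t := lt_of_lt_of_le hε0 ht.1
      have h1 := hCb t ht0
      have h2 := (hEpos t).le
      nlinarith
    linarith [hadj]
  have hlt2 : (∫ t in (0:ℝ)..x, E t * F t) < C * ∫ t in (0:ℝ)..x, E t * f t := by
    have heq : C * (∫ t in (0:ℝ)..x, E t * f t) - (∫ t in (0:ℝ)..x, E t * F t)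
        = ∫ t in (0:ℝ)..x, E t * (C * f t - F t) := by
      rw [← intervalIntegral.integral_const_mul,
        ← intervalIntegral.integral_sub (hEfint.const_mul C) hEFint]
      apply intervalIntegral.integral_congr
      intro t _
      ring
    linarith
  -- conclusion
  have hδ : 0 < 1 - C * γ := by
    have : γ * C < (1 / C) * C := by
      apply mul_lt_mul_of_pos_right hγC hC
    rw [one_div_mul_cancel hC.ne'] at this
    linarith
  set J : ℝ := ∫ t in (0:ℝ)..x, E t * f t with hJdef
  have hfinal : J * (1 - C * γ) < E x * F x := by
    have h1 : J - γ * ∫ t in (0:ℝ)..x, E t * F t = E x * F x := hsplit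
    nlinarith [hlt2]
  have hgoalL : (∫ t in (0:ℝ)..x, Real.exp (-(γ * t)) * besselI μ t / t ^ ν) = J := by
    apply intervalIntegral.integral_congr
    intro t _
    simp only [hEdef, hfdef]
    rw [mul_div_assoc]
  rw [hgoalL]
  have : (Real.exp (-(γ * x)) / (1 - C * γ)) * F x = (E x * F x) / (1 - C * γ) := by
    simp only [hEdef]
    ring
  rw [show (∫ t in (0:ℝ)..x, besselI μ t / t ^ ν) = F x from rfl, this, lt_div_iff₀ hδ]
  exact hfinal
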